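/- Let Ω be a finite connected subset of a weighted graph and p > 1. If u is an eigenfunction of the Dirichlet p-Laplacian on Ω with u > 0 on all of Ω, then u is a first eigenfunction, i.e., its eigenvalue equals λ_{1,p}(Ω). -/

import Mathlib

open scoped BigOperators

namespace PGraph

variable {V : Type*}

/-- The `p`-Dirichlet energy `E_p(u) = (1/2) ∑_{x,y} μ_{xy} |u(y)-u(x)|^p`. -/
noncomputable def energy (μ : V → V → ℝ) (p : ℝ) (u : V → ℝ) : ℝ :=
  (1 / 2) * ∑ᶠ x : V, ∑ᶠ y : V, μ x y * |u y - u x| ^ p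

/-- `‖u‖_{p,Ω}^p = ∑_{x∈Ω} |u(x)|^p ν_x`. -/
noncomputable def pnormP (ν : V → ℝ) (Ω : Finset V) (p : ℝ) (u : V → ℝ) : ℝ :=
  ∑ x ∈ Ω, |u x| ^ p * ν x

/-- The `p`-Laplacian `Δ_p u(x) = (1/ν_x) ∑_y μ_{xy} |u(y)-u(x)|^{p-2}(u(y)-u(x))`. -/
noncomputable def plap (μ : V → V → ℝ) (ν : V → ℝ) (p : ℝ) (u : V → ℝ) (x : V) : ℝ :=
  (1 / ν x) * ∑ᶠ y : V, μ x y * (|u y - u x| ^ (p - 2) * (u y - u x))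

/-- `u` is an eigenfunction of the Dirichlet `p`-Laplacian on `Ω` with eigenvalue `lam`:
`u` vanishes outside `Ω` (zero extension), `u ≢ 0` on `Ω`, and
`Δ_p u = -lam |u|^{p-2} u` on `Ω`. -/
def IsDirEigenfun (μ : V → V → ℝ) (ν : V → ℝ) (Ω : Finset V) (p : ℝ)
    (u : V → ℝ) (lam : ℝ) : Prop :=
  (∀ x, x ∉ Ω → u x = 0) ∧ (∃ x ∈ Ω, u x ≠ 0) ∧
    ∀ x ∈ Ω, plap μ ν p u x = -lam * (|u x| ^ (p - 2) * u x)

/-- The first Dirichlet eigenvalue, via the Rayleigh quotient characterization. -/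
noncomputable def lam1 (μ : V → V → ℝ) (ν : V → ℝ) (Ω : Finset V) (p : ℝ) : ℝ :=
  sInf {t : ℝ | ∃ u : V → ℝ, (∀ x, x ∉ Ω → u x = 0) ∧ (∃ x ∈ Ω, u x ≠ 0) ∧
    t = energy μ p u / pnormP ν Ω p u}

/-- The maximum Dirichlet eigenvalue, via the Rayleigh quotient characterization. -/
noncomputable def lamMax (μ : V → V → ℝ) (ν : V → ℝ) (Ω : Finset V) (p : ℝ) : ℝ :=
  sSup {t : ℝ | ∃ u : V → ℝ, (∀ x, x ∉ Ω → u x = 0) ∧ (∃ x ∈ Ω, u x ≠ 0) ∧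
    t = energy μ p u / pnormP ν Ω p u}

/-- The induced subgraph on `Ω` is connected. -/
def ConnOn (μ : V → V → ℝ) (Ω : Finset V) : Prop :=
  ∀ x ∈ Ω, ∀ y ∈ Ω,
    Relation.ReflTransGen (fun a b => a ∈ Ω ∧ b ∈ Ω ∧ 0 < μ a b) x y

/-- The induced subgraph on `Ω` is bipartite with parts `V₁, V₂`. -/
def BipartiteOn (μ : V → V → ℝ) (Ω : Finset V) : Prop :=
  ∃ V₁ V₂ : Set V, (Ω : Set V) = V₁ ∪ V₂ ∧ Disjoint V₁ V₂ ∧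
    ∀ x ∈ Ω, ∀ y ∈ Ω, 0 < μ x y → ((x ∈ V₁ ∧ y ∈ V₂) ∨ (x ∈ V₂ ∧ y ∈ V₁))

/-- A locally finite weighted graph: symmetric nonnegative edge weights without
self-loops, finitely many neighbours at each vertex, positive vertex weights. -/
structure IsWeightedGraph (μ : V → V → ℝ) (ν : V → ℝ) : Prop where
  symm : ∀ x y, μ x y = μ y x
  nonneg : ∀ x y, 0 ≤ μ x y
  loopless : ∀ x, μ x x = 0
  locFin : ∀ x, (Function.support (μ x)).Finite
  nuPos : ∀ x, 0 < ν x

/-- The edge boundary measure `|∂U|_μ` of a finite vertex set `U`. -/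
noncomputable def bdryWt (μ : V → V → ℝ) (U : Finset V) : ℝ :=
  ∑ x ∈ U, ∑ᶠ y ∈ {z : V | z ∉ U}, μ x y

/-- The Dirichlet Cheeger constant `h_{μ,ν}(Ω) = min_{∅ ≠ U ⊆ Ω} |∂U|_μ / |U|_ν`. -/
noncomputable def cheeger (μ : V → V → ℝ) (ν : V → ℝ) (Ω : Finset V) : ℝ :=
  sInf {t : ℝ | ∃ U : Finset V, U ⊆ Ω ∧ U.Nonempty ∧
    t = bdryWt μ U / ∑ x ∈ U, ν x}

end PGraph

namespace PGraph

variable {V : Type*}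

lemma young_aux {p : ℝ} (hp : 1 < p) {α β : ℝ} (hα : 0 ≤ α) (hβ : 0 ≤ β) :
    p * (β ^ (p-1) * α) ≤ (p-1) * β ^ p + α ^ p := by
  have hp0 : (0:ℝ) < p := by linarith
  have key := Real.geom_mean_le_arith_mean2_weighted
    (w₁ := (p-1)/p) (w₂ := 1/p) (p₁ := β^p) (p₂ := α^p)
    (div_nonneg (by linarith) hp0.le) (by positivity)
    (Real.rpow_nonneg hβ p) (Real.rpow_nonneg hα p)
    (by field_simp; ring)
  have h1 : (β ^ p) ^ ((p-1)/p) = β ^ (p-1) := by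
    rw [← Real.rpow_mul hβ]
    congr 1
    field_simp
  have h2 : (α ^ p) ^ ((1:ℝ)/p) = α := by
    rw [← Real.rpow_mul hα, show p * (1/p) = 1 by field_simp, Real.rpow_one]
  rw [h1, h2] at key
  have h3 : p * ((p-1)/p * β ^ p + 1/p * α ^ p) = (p-1) * β ^ p + α ^ p := by
    field_simp
  have h4 := mul_le_mul_of_nonneg_left key hp0.le
  linarith [h4, h3.le, h3.ge]

lemma tangent_line {p : ℝ} (hp : 1 < p) {s : ℝ} (hs : 0 ≤ s) (x : ℝ) :
    s ^ p + p * (s ^ (p-1) * (x - s)) ≤ |x| ^ p := by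
  have hp0 : (0:ℝ) < p := by linarith
  rcases eq_or_lt_of_le hs with h0 | hspos
  · simp [← h0, Real.zero_rpow (by linarith : p ≠ 0),
      Real.zero_rpow (by intro h; linarith [h] : p - 1 ≠ 0)]
    positivity
  have hss : s ^ (p-1) * s = s ^ p := by
    rw [← Real.rpow_add_one (ne_of_gt hspos)]; ring_nf
  rcases le_or_gt 0 x with hx | hx
  · have hy := young_aux hp hx hs
    rw [abs_of_nonneg hx]
    nlinarith [hy, hss]
  · have h1 : s ^ (p-1) * x ≤ 0 :=
      mul_nonpos_of_nonneg_of_nonpos (Real.rpow_nonneg hs _) hx.le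
    have h2 : (0:ℝ) ≤ |x| ^ p := Real.rpow_nonneg (abs_nonneg _) _
    nlinarith [Real.rpow_nonneg hs p]

lemma picone_pos {p : ℝ} (hp : 1 < p) {a b A B : ℝ} (ha : 0 < a) (hb : 0 < b)
    (hA : 0 ≤ A) (hB : 0 ≤ B) (hab : a < b) :
    (b-a) ^ (p-1) * (B ^ p / b ^ (p-1) - A ^ p / a ^ (p-1)) ≤ |B - A| ^ p := by
  have hp0 : (0:ℝ) < p := by linarith
  set c : ℝ := b - a with hc
  have hcpos : 0 < c := by simp [hc]; linarith
  set β : ℝ := B / b with hβdef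
  set α : ℝ := A / a with hαdef
  have hβ : 0 ≤ β := div_nonneg hB hb.le
  have hα : 0 ≤ α := div_nonneg hA ha.le
  have hBb : B = b * β := by rw [hβdef]; field_simp
  have hAa : A = a * α := by rw [hαdef]; field_simp
  have hcp : c ^ p = c ^ (p-1) * c := by
    rw [← Real.rpow_add_one (ne_of_gt hcpos) (p-1)]; congr 1; ring
  have hbp : b ^ p = b ^ (p-1) * b := by
    rw [← Real.rpow_add_one (ne_of_gt hb) (p-1)]; congr 1; ring
  have hap : a ^ p = a ^ (p-1) * a := by
    rw [← Real.rpow_add_one (ne_of_gt ha) (p-1)]; congr 1; ring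
  have hb1 : (0:ℝ) < b ^ (p-1) := Real.rpow_pos_of_pos hb _
  have ha1 : (0:ℝ) < a ^ (p-1) := Real.rpow_pos_of_pos ha _
  have hBpb : B ^ p / b ^ (p-1) = b * β ^ p := by
    rw [hBb, Real.mul_rpow hb.le hβ, hbp]
    field_simp
  have hApa : A ^ p / a ^ (p-1) = a * α ^ p := by
    rw [hAa, Real.mul_rpow ha.le hα, hap]
    field_simp
  have hββ : β ^ (p-1) * β = β ^ p := by
    rcases eq_or_lt_of_le hβ with h0 | hβpos
    · rw [← h0]
      rw [Real.zero_rpow (by linarith : p ≠ 0),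
        Real.zero_rpow (by intro h; linarith [h] : p - 1 ≠ 0)]
      ring
    · rw [← Real.rpow_add_one (ne_of_gt hβpos)]; ring_nf
  have htan := tangent_line hp (s := c * β) (mul_nonneg hcpos.le hβ) (B - A)
  have hmc : (c*β) ^ p = c ^ (p-1) * (c * β ^ p) := by
    rw [Real.mul_rpow hcpos.le hβ, hcp]; ring
  have hmc1 : (c*β) ^ (p-1) = c ^ (p-1) * β ^ (p-1) := Real.mul_rpow hcpos.le hβ
  rw [hmc, hmc1] at htan
  have hy := young_aux hp hα hβ
  have hc1 : (0:ℝ) ≤ c ^ (p-1) := Real.rpow_nonneg hcpos.le _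
  have hlin : B - A - c * β = a * (β - α) := by
    rw [hBb, hAa, hc]; ring
  rw [hBpb, hApa]
  have key : c ^ (p-1) * (b * β ^ p - a * α ^ p)
      ≤ c ^ (p-1) * (c * β ^ p) + p * (c ^ (p-1) * β ^ (p-1) * (B - A - c*β)) := by
    rw [hlin]
    have expand : c ^ (p-1) * (c * β ^ p) + p * (c ^ (p-1) * β ^ (p-1) * (a * (β - α)))
        - c ^ (p-1) * (b * β ^ p - a * α ^ p)
        = c ^ (p-1) * (a * ((p-1) * β ^ p + α ^ p - p * (β ^ (p-1) * α))) := by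
      linear_combination ((b-a) ^ (p-1) * p * a) * hββ
    have hnn : (0:ℝ) ≤ c ^ (p-1) * (a * ((p-1) * β ^ p + α ^ p - p * (β ^ (p-1) * α))) :=
      mul_nonneg hc1 (mul_nonneg ha.le (by linarith [hy]))
    linarith [expand, hnn]
  linarith [key, htan]

lemma picone {p : ℝ} (hp : 1 < p) {a b A B : ℝ} (ha : 0 ≤ a) (hb : 0 ≤ b)
    (hA : 0 ≤ A) (hB : 0 ≤ B) (haA : a = 0 → A = 0) (hbB : b = 0 → B = 0) :
    |b - a| ^ (p-2) * (b - a) * (B ^ p / b ^ (p-1) - A ^ p / a ^ (p-1)) ≤ |B - A| ^ p := by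
  have hp1 : p - 1 ≠ 0 := by intro h; linarith [h]
  have hp0 : p ≠ 0 := by intro h; linarith [h]
  have hpow : ∀ d : ℝ, 0 < d → d ^ (p-1) = d ^ (p-2) * d := fun d hd => by
    rw [← Real.rpow_add_one (ne_of_gt hd) (p-2)]; congr 1; ring
  rcases lt_trichotomy a b with hab | hab | hab
  · rcases eq_or_lt_of_le ha with ha0 | hapos
    · have hA0 : A = 0 := haA ha0.symm
      have hbpos : 0 < b := by linarith [ha0]
      rw [← ha0, hA0, sub_zero, sub_zero, abs_of_pos hbpos,
        Real.zero_rpow hp0, Real.zero_rpow hp1, zero_div, sub_zero,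
        ← hpow b hbpos, mul_comm,
        div_mul_cancel₀ _ (ne_of_gt (Real.rpow_pos_of_pos hbpos (p-1))),
        abs_of_nonneg hB]
    · calc |b - a| ^ (p-2) * (b - a) * (B ^ p / b ^ (p-1) - A ^ p / a ^ (p-1))
          = (b-a) ^ (p-1) * (B ^ p / b ^ (p-1) - A ^ p / a ^ (p-1)) := by
            rw [abs_of_pos (by linarith : (0:ℝ) < b - a), hpow (b-a) (by linarith)]
        _ ≤ |B - A| ^ p := picone_pos hp hapos (lt_trans hapos hab) hA hB hab
  · rw [hab, sub_self]
    simp only [abs_zero, mul_zero, zero_mul]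
    exact Real.rpow_nonneg (abs_nonneg _) p
  · rcases eq_or_lt_of_le hb with hb0 | hbpos
    · have hB0 : B = 0 := hbB hb0.symm
      have hapos : 0 < a := by linarith [hb0]
      rw [← hb0, hB0, zero_sub, zero_sub, abs_neg, abs_of_pos hapos,
        Real.zero_rpow hp0, Real.zero_rpow hp1, zero_div, zero_sub, abs_neg,
        abs_of_nonneg hA]
      have h1 : a ^ (p-2) * -a * -(A ^ p / a ^ (p-1)) = a ^ (p-1) * (A ^ p / a ^ (p-1)) := by
        rw [hpow a hapos]; ring
      rw [h1, mul_comm, div_mul_cancel₀ _ (ne_of_gt (Real.rpow_pos_of_pos hapos (p-1)))]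
    · have key := picone_pos hp (p := p) hbpos (lt_trans hbpos hab) hB hA hab
      calc |b - a| ^ (p-2) * (b - a) * (B ^ p / b ^ (p-1) - A ^ p / a ^ (p-1))
          = (a-b) ^ (p-1) * (A ^ p / a ^ (p-1) - B ^ p / b ^ (p-1)) := by
            rw [abs_of_neg (by linarith : b - a < 0), show -(b-a) = a - b by ring,
              hpow (a-b) (by linarith)]
            ring
        _ ≤ |A - B| ^ p := key
        _ = |B - A| ^ p := by rw [abs_sub_comm]

lemma energy_eq_sum {μ : V → V → ℝ} {ν : V → ℝ} (hG : IsWeightedGraph μ ν)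
    {Ω N : Finset V} (hΩN : Ω ⊆ N)
    (hNbr : ∀ x ∈ Ω, ∀ y, μ x y ≠ 0 → y ∈ N)
    {p : ℝ} (hp : 0 < p) {w : V → ℝ} (hw : ∀ x, x ∉ Ω → w x = 0) :
    energy μ p w = (1 / 2) * ∑ x ∈ N, ∑ y ∈ N, μ x y * |w y - w x| ^ p := by
  have hterm : ∀ x y : V, μ x y * |w y - w x| ^ p ≠ 0 → μ x y ≠ 0 ∧ w y ≠ w x := by
    intro x y h
    constructor
    · intro h0; rw [h0, zero_mul] at h; exact h rfl
    · intro h0; rw [h0, sub_self, abs_zero, Real.zero_rpow (ne_of_gt hp), mul_zero] at h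
      exact h rfl
  have hinner : ∀ x : V, ∑ᶠ y : V, μ x y * |w y - w x| ^ p
      = ∑ y ∈ N, μ x y * |w y - w x| ^ p := by
    intro x
    apply finsum_eq_sum_of_support_subset
    intro y hy
    obtain ⟨hμ, hne⟩ := hterm x y hy
    by_cases hx : x ∈ Ω
    · exact hNbr x hx y hμ
    · have hwy : w y ≠ 0 := by rw [hw x hx] at hne; exact hne
      have hyΩ : y ∈ Ω := by by_contra h; exact hwy (hw y h)
      exact hΩN hyΩ
  unfold energy
  congr 1
  rw [finsum_congr hinner]
  apply finsum_eq_sum_of_support_subset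
  intro x hx
  simp only [Function.mem_support] at hx
  obtain ⟨y, hyN, hyne⟩ := Finset.exists_ne_zero_of_sum_ne_zero hx
  obtain ⟨hμ, hne⟩ := hterm x y hyne
  by_cases hxΩ : x ∈ Ω
  · exact hΩN hxΩ
  · have hwy : w y ≠ 0 := by rw [hw x hxΩ] at hne; exact hne
    have hyΩ : y ∈ Ω := by by_contra h; exact hwy (hw y h)
    have : μ y x ≠ 0 := by rw [← hG.symm x y]; exact hμ
    exact hNbr y hyΩ x this

lemma green_formula {μ : V → V → ℝ} {ν : V → ℝ} (hG : IsWeightedGraph μ ν)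
    {Ω N : Finset V} (hΩN : Ω ⊆ N)
    (hNbr : ∀ x ∈ Ω, ∀ y, μ x y ≠ 0 → y ∈ N)
    {p : ℝ} (u : V → ℝ) {w : V → ℝ} (hw : ∀ x, x ∉ Ω → w x = 0) :
    ∑ x ∈ Ω, (ν x * plap μ ν p u x) * w x
      = -(1 / 2) * ∑ x ∈ N, ∑ y ∈ N,
          μ x y * (|u y - u x| ^ (p - 2) * (u y - u x)) * (w y - w x) := by
  have hplap : ∀ x ∈ Ω, ν x * plap μ ν p u x
      = ∑ y ∈ N, μ x y * (|u y - u x| ^ (p - 2) * (u y - u x)) := by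
    intro x hx
    unfold plap
    rw [← mul_assoc, mul_one_div, div_self (ne_of_gt (hG.nuPos x)), one_mul]
    apply finsum_eq_sum_of_support_subset
    intro y hy
    simp only [Function.mem_support] at hy
    have hμ : μ x y ≠ 0 := by intro h0; rw [h0, zero_mul] at hy; exact hy rfl
    exact hNbr x hx y hμ
  have h1 : ∑ x ∈ Ω, (ν x * plap μ ν p u x) * w x
      = ∑ x ∈ N, ∑ y ∈ N, μ x y * (|u y - u x| ^ (p - 2) * (u y - u x)) * w x := by
    have h1' : ∀ x ∈ Ω, (ν x * plap μ ν p u x) * w x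
        = ∑ y ∈ N, μ x y * (|u y - u x| ^ (p - 2) * (u y - u x)) * w x := by
      intro x hx; rw [hplap x hx, Finset.sum_mul]
    rw [Finset.sum_congr rfl h1']
    apply Finset.sum_subset hΩN
    intro x _ hxΩ
    apply Finset.sum_eq_zero
    intro y _
    rw [hw x hxΩ, mul_zero]
  set T := ∑ x ∈ N, ∑ y ∈ N, μ x y * (|u y - u x| ^ (p - 2) * (u y - u x)) * w x with hT
  have hswap : T = -∑ x ∈ N, ∑ y ∈ N,
      μ x y * (|u y - u x| ^ (p - 2) * (u y - u x)) * w y := by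
    rw [hT, Finset.sum_comm]
    rw [← Finset.sum_neg_distrib]
    apply Finset.sum_congr rfl
    intro y _
    rw [← Finset.sum_neg_distrib]
    apply Finset.sum_congr rfl
    intro x _
    rw [hG.symm y x, abs_sub_comm (u x) (u y)]
    ring
  rw [h1]
  have expand : ∑ x ∈ N, ∑ y ∈ N,
      μ x y * (|u y - u x| ^ (p - 2) * (u y - u x)) * (w y - w x)
      = (∑ x ∈ N, ∑ y ∈ N, μ x y * (|u y - u x| ^ (p - 2) * (u y - u x)) * w y) - T := by
    rw [hT, ← Finset.sum_sub_distrib]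
    apply Finset.sum_congr rfl
    intro x _
    rw [← Finset.sum_sub_distrib]
    apply Finset.sum_congr rfl
    intro y _
    ring
  rw [expand]
  linarith [hswap]

end PGraph

namespace PGraph

/-- An eigenfunction of the Dirichlet `p`-Laplacian (`p > 1`) on a finite
connected subset `Ω` which is positive on all of `Ω` is a first eigenfunction, i.e. its
eigenvalue equals `λ_{1,p}(Ω)`. -/
theorem positive_eigenfun_is_first {V : Type*} {μ : V → V → ℝ} {ν : V → ℝ}
    (hG : IsWeightedGraph μ ν) {Ω : Finset V} (hconn : ConnOn μ Ω)
    {p : ℝ} (hp : 1 < p) {u : V → ℝ} {lam : ℝ}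
    (hu : IsDirEigenfun μ ν Ω p u lam) (hpos : ∀ x ∈ Ω, 0 < u x) :
    lam = lam1 μ ν Ω p := by
  classical
  obtain ⟨hu0, ⟨x₀, hx₀, hux₀⟩, heig⟩ := hu
  have hp0 : (0:ℝ) < p := by linarith
  have hpne : p ≠ 0 := ne_of_gt hp0
  set N : Finset V := Ω ∪ Ω.biUnion (fun z => (hG.locFin z).toFinset) with hN
  have hΩN : Ω ⊆ N := Finset.subset_union_left
  have hNbr : ∀ x ∈ Ω, ∀ y, μ x y ≠ 0 → y ∈ N := by
    intro x hx y hμ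
    exact Finset.mem_union_right _
      (Finset.mem_biUnion.2 ⟨x, hx, (Set.Finite.mem_toFinset _).2 hμ⟩)
  have hunn : ∀ x, 0 ≤ u x := fun x => by
    by_cases hx : x ∈ Ω
    · exact (hpos x hx).le
    · rw [hu0 x hx]
  -- |d|^{p-2} d d = |d|^p
  have habs2 : ∀ d : ℝ, |d| ^ (p-2) * d * d = |d| ^ p := by
    intro d
    rcases eq_or_ne d 0 with rfl | hd
    · simp [Real.zero_rpow hpne]
    · have hane : |d| ≠ 0 := abs_ne_zero.2 hd
      have h1 : |d| ^ (p-2) * d * d = |d| ^ (p-2) * |d| * |d| := by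
        rcases abs_cases d with ⟨h, _⟩ | ⟨h, _⟩ <;> rw [h] <;> ring
      rw [h1, ← Real.rpow_add_one hane (p-2)]
      rw [← Real.rpow_add_one hane (p-2+1)]
      congr 1; ring
  -- Step A : lam * pnormP u = energy u
  have hGu := green_formula hG hΩN hNbr (p := p) u hu0
  have hLterm : ∀ x ∈ Ω, (ν x * plap μ ν p u x) * u x = -lam * (|u x| ^ p * ν x) := by
    intro x hx
    rw [heig x hx]
    have hxp := hpos x hx
    rw [abs_of_pos hxp]
    have h2 : u x ^ (p-2) * u x * u x = u x ^ p := by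
      have := habs2 (u x)
      rw [abs_of_pos hxp] at this
      exact this
    linear_combination (-lam * ν x) * h2
  have hL : ∑ x ∈ Ω, (ν x * plap μ ν p u x) * u x = -lam * pnormP ν Ω p u := by
    unfold pnormP
    rw [Finset.mul_sum]
    exact Finset.sum_congr rfl hLterm
  have hR : ∑ x ∈ N, ∑ y ∈ N, μ x y * (|u y - u x| ^ (p-2) * (u y - u x)) * (u y - u x)
      = ∑ x ∈ N, ∑ y ∈ N, μ x y * |u y - u x| ^ p := by
    refine Finset.sum_congr rfl fun x _ => Finset.sum_congr rfl fun y _ => ?_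
    rw [mul_assoc, mul_assoc, ← mul_assoc (|u y - u x| ^ (p-2)), habs2]
  have hEu : energy μ p u = (1/2) * ∑ x ∈ N, ∑ y ∈ N, μ x y * |u y - u x| ^ p :=
    energy_eq_sum hG hΩN hNbr hp0 hu0
  have hstepA : lam * pnormP ν Ω p u = energy μ p u := by
    rw [hL] at hGu
    rw [hEu]
    rw [hR] at hGu
    linarith [hGu]
  have hPu_pos : 0 < pnormP ν Ω p u := by
    apply Finset.sum_pos'
    · intro x _
      exact mul_nonneg (Real.rpow_nonneg (abs_nonneg _) _) (hG.nuPos x).le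
    · refine ⟨x₀, hx₀, ?_⟩
      have := hpos x₀ hx₀
      have h1 : (0:ℝ) < |u x₀| ^ p := Real.rpow_pos_of_pos (abs_pos.2 (ne_of_gt this)) p
      exact mul_pos h1 (hG.nuPos x₀)
  have hmem : lam ∈ {t : ℝ | ∃ v : V → ℝ, (∀ x, x ∉ Ω → v x = 0) ∧ (∃ x ∈ Ω, v x ≠ 0) ∧
      t = energy μ p v / pnormP ν Ω p v} := by
    exact ⟨u, hu0, ⟨x₀, hx₀, hux₀⟩, (eq_div_iff (ne_of_gt hPu_pos)).2 hstepA⟩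
  have hlb : ∀ t ∈ {t : ℝ | ∃ v : V → ℝ, (∀ x, x ∉ Ω → v x = 0) ∧ (∃ x ∈ Ω, v x ≠ 0) ∧
      t = energy μ p v / pnormP ν Ω p v}, (0:ℝ) ≤ t := by
    rintro t ⟨v, hv0, hvne, rfl⟩
    apply div_nonneg
    · unfold energy
      apply mul_nonneg (by norm_num)
      apply finsum_nonneg
      intro x
      apply finsum_nonneg
      intro y
      exact mul_nonneg (hG.nonneg x y) (Real.rpow_nonneg (abs_nonneg _) _)
    · apply Finset.sum_nonneg
      intro x _
      exact mul_nonneg (Real.rpow_nonneg (abs_nonneg _) _) (hG.nuPos x).le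
  -- the key bound : lam ≤ every Rayleigh quotient
  have hbound : ∀ t ∈ {t : ℝ | ∃ v : V → ℝ, (∀ x, x ∉ Ω → v x = 0) ∧ (∃ x ∈ Ω, v x ≠ 0) ∧
      t = energy μ p v / pnormP ν Ω p v}, lam ≤ t := by
    rintro t ⟨v, hv0, ⟨y₀, hy₀, hvy₀⟩, rfl⟩
    have hv'0 : ∀ x, x ∉ Ω → |v x| = 0 := fun x hx => by rw [hv0 x hx, abs_zero]
    have hP' : pnormP ν Ω p (fun z => |v z|) = pnormP ν Ω p v := by
      unfold pnormP
      exact Finset.sum_congr rfl fun x _ => by rw [abs_abs]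
    have hPv_pos : 0 < pnormP ν Ω p v := by
      apply Finset.sum_pos'
      · intro x _
        exact mul_nonneg (Real.rpow_nonneg (abs_nonneg _) _) (hG.nuPos x).le
      · exact ⟨y₀, hy₀, mul_pos (Real.rpow_pos_of_pos (abs_pos.2 hvy₀) p) (hG.nuPos y₀)⟩
    have hEv' : energy μ p (fun z => |v z|) ≤ energy μ p v := by
      rw [energy_eq_sum hG hΩN hNbr hp0 hv'0, energy_eq_sum hG hΩN hNbr hp0 hv0]
      apply mul_le_mul_of_nonneg_left _ (by norm_num : (0:ℝ) ≤ 1/2)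
      apply Finset.sum_le_sum
      intro x _
      apply Finset.sum_le_sum
      intro y _
      apply mul_le_mul_of_nonneg_left _ (hG.nonneg x y)
      exact Real.rpow_le_rpow (abs_nonneg _) (abs_abs_sub_abs_le_abs_sub _ _) hp0.le
    -- Picone argument with test function w = |v|^p / u^{p-1}
    have hww : ∀ x, x ∉ Ω → |v x| ^ p / u x ^ (p-1) = 0 := by
      intro x hx
      rw [hv0 x hx, abs_zero, Real.zero_rpow hpne, zero_div]
    have hGw := green_formula hG hΩN hNbr (p := p) u
      (w := fun z => |v z| ^ p / u z ^ (p-1)) hww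
    have hLw : ∀ x ∈ Ω, (ν x * plap μ ν p u x) * (|v x| ^ p / u x ^ (p-1))
        = -lam * (|(|v x|)| ^ p * ν x) := by
      intro x hx
      rw [heig x hx, abs_abs]
      have hxp := hpos x hx
      have h2 : |u x| ^ (p-2) * u x = u x ^ (p-1) := by
        rw [abs_of_pos hxp, ← Real.rpow_add_one (ne_of_gt hxp) (p-2)]
        congr 1; ring
      rw [h2]
      have hne : u x ^ (p-1) ≠ 0 := ne_of_gt (Real.rpow_pos_of_pos hxp _)
      field_simp
    have hLsum : ∑ x ∈ Ω, (ν x * plap μ ν p u x) * (|v x| ^ p / u x ^ (p-1))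
        = -lam * pnormP ν Ω p (fun z => |v z|) := by
      unfold pnormP
      rw [Finset.mul_sum]
      exact Finset.sum_congr rfl hLw
    have hPicone : ∑ x ∈ N, ∑ y ∈ N, μ x y * (|u y - u x| ^ (p-2) * (u y - u x)) *
          (|v y| ^ p / u y ^ (p-1) - |v x| ^ p / u x ^ (p-1))
        ≤ ∑ x ∈ N, ∑ y ∈ N, μ x y * |(|v y|) - (|v x|)| ^ p := by
      apply Finset.sum_le_sum
      intro x _
      apply Finset.sum_le_sum
      intro y _
      have hkey := picone hp (hunn x) (hunn y) (abs_nonneg (v x)) (abs_nonneg (v y))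
        (fun h => by
          have hxΩ : x ∉ Ω := fun hmem => (ne_of_gt (hpos x hmem)) h
          rw [hv0 x hxΩ, abs_zero])
        (fun h => by
          have hyΩ : y ∉ Ω := fun hmem => (ne_of_gt (hpos y hmem)) h
          rw [hv0 y hyΩ, abs_zero])
      calc μ x y * (|u y - u x| ^ (p-2) * (u y - u x)) *
            (|v y| ^ p / u y ^ (p-1) - |v x| ^ p / u x ^ (p-1))
          = μ x y * (|u y - u x| ^ (p-2) * (u y - u x) *
            (|v y| ^ p / u y ^ (p-1) - |v x| ^ p / u x ^ (p-1))) := by ring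
        _ ≤ μ x y * |(|v y|) - (|v x|)| ^ p := mul_le_mul_of_nonneg_left hkey (hG.nonneg x y)
    have hEv'' : energy μ p (fun z => |v z|)
        = (1/2) * ∑ x ∈ N, ∑ y ∈ N, μ x y * |(fun z => |v z|) y - (fun z => |v z|) x| ^ p :=
      energy_eq_sum hG hΩN hNbr hp0 hv'0
    simp only at hEv''
    have hclaim : lam * pnormP ν Ω p (fun z => |v z|) ≤ energy μ p (fun z => |v z|) := by
      rw [hLsum] at hGw
      rw [hEv'']
      linarith [hGw, hPicone]
    rw [le_div_iff₀ hPv_pos]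
    calc lam * pnormP ν Ω p v = lam * pnormP ν Ω p (fun z => |v z|) := by rw [hP']
      _ ≤ energy μ p (fun z => |v z|) := hclaim
      _ ≤ energy μ p v := hEv'
  -- combine
  unfold lam1
  apply le_antisymm
  · exact le_csInf ⟨lam, hmem⟩ hbound
  · exact csInf_le ⟨0, hlb⟩ hmem

end PGraph
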